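/- Suppose v : ℕ → ℝ satisfies |v(k)| ≤ C/k² for k ≥ 1. Define c_k^{(0)}(t) = v(k)cos(kt) + Σ_{m=1}^∞ [v(mN+k)cos((mN+k)t) + v(mN−k)cos((mN−k)t)] and hc^{(0,1)}(k) = v(k) + Σ_{m=1}^∞ (−1)^m [v(mN+k) + v(mN−k)]. Then at every shifted node t_j = π(2j−1)/N, c_k^{(0)}(t_j) = hc^{(0,1)}(k)·cos(k·t_j). -/

import Mathlib

open Real

theorem basis_cos_interpolation_grid01
    (v : ℕ → ℝ) (C : ℝ) (hv : ∀ k : ℕ, 1 ≤ k → |v k| ≤ C / (k : ℝ) ^ 2)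
    (N : ℕ) (hN : 3 ≤ N) (k : ℕ) (hk : 1 ≤ k) (hkN : k < N)
    (j : ℤ) :
    (fun t : ℝ => v k * Real.cos (k * t) +
        ∑' m : ℕ,
          (v ((m + 1) * N + k) * Real.cos ((((m + 1) * N + k : ℕ) : ℝ) * t) +
           v ((m + 1) * N - k) * Real.cos ((((m + 1) * N - k : ℕ) : ℝ) * t)))
      (π * (2 * (j : ℝ) - 1) / N) =
    (v k + ∑' m : ℕ, (-1 : ℝ) ^ (m + 1) * (v ((m + 1) * N + k) + v ((m + 1) * N - k))) *
      Real.cos (k * (π * (2 * (j : ℝ) - 1) / N)) := by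
  have hN0 : (N : ℝ) ≠ 0 := by positivity
  set t : ℝ := π * (2 * (j : ℝ) - 1) / N with ht
  have hNt' : (N : ℝ) * t = π * (2 * (j : ℝ) - 1) := by
    rw [ht]; field_simp
  simp only
  have hsign : ∀ m : ℕ, ((-1 : ℝ) ^ (((m : ℤ) + 1) * (2 * j - 1)) : ℝ) = (-1 : ℝ) ^ (m + 1) := by
    intro m
    rw [zpow_mul]
    rcases Nat.even_or_odd (m + 1) with he | ho
    · have : ((-1 : ℝ) ^ ((m : ℤ) + 1)) = 1 := by
        have : Even ((m : ℤ) + 1) := by exact_mod_cast (Int.even_coe_nat (m+1)).mpr he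
        exact this.neg_one_zpow
      rw [this, one_zpow, he.neg_one_pow]
    · have hb : ((-1 : ℝ) ^ ((m : ℤ) + 1)) = -1 := by
        have : Odd ((m : ℤ) + 1) := by exact_mod_cast Int.odd_coe_nat (m+1) |>.mpr ho
        exact this.neg_one_zpow
      have hod : Odd (2 * j - 1) := ⟨j - 1, by ring⟩
      rw [hb, hod.neg_one_zpow, ho.neg_one_pow]
  have key : ∀ m : ℕ,
      v ((m + 1) * N + k) * Real.cos ((((m + 1) * N + k : ℕ) : ℝ) * t) +
        v ((m + 1) * N - k) * Real.cos ((((m + 1) * N - k : ℕ) : ℝ) * t)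
      = ((-1 : ℝ) ^ (m + 1) * (v ((m + 1) * N + k) + v ((m + 1) * N - k))) *
          Real.cos ((k : ℝ) * t) := by
    intro m
    have hkle : k ≤ (m + 1) * N := le_trans hkN.le (Nat.le_mul_of_pos_left N (Nat.succ_pos m))
    have hcast : (((m + 1) * N - k : ℕ) : ℝ) = ((m + 1) * N : ℕ) - (k : ℝ) := by
      push_cast [Nat.cast_sub hkle]; ring
    have h1 : (((m + 1) * N + k : ℕ) : ℝ) * t =
        (k : ℝ) * t + (((((m : ℤ) + 1) * (2 * j - 1)) : ℤ) : ℝ) * π := by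
      push_cast
      linear_combination ((m : ℝ) + 1) * hNt'
    have h2 : (((m + 1) * N - k : ℕ) : ℝ) * t =
        (((((m : ℤ) + 1) * (2 * j - 1)) : ℤ) : ℝ) * π - (k : ℝ) * t := by
      rw [hcast]
      push_cast
      linear_combination ((m : ℝ) + 1) * hNt'
    rw [h1, h2, Real.cos_add_int_mul_pi, Real.cos_int_mul_pi_sub, hsign m]
    ring
  rw [tsum_congr key, tsum_mul_right]
  ring
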